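/- Let P = (P_w)_{w∈W} be a probability distribution on a finite vocabulary with all P_w > 0, (U_w) i.i.d. Uniform(0,1), w* = argmax_w (log U_w)/P_w, and Y = U_{w*}. Then for every r ∈ [0,1], P(Y ≤ r) = Σ_{w∈W} P_w · r^{1/P_w}. -/

import Mathlib

open MeasureTheory ProbabilityTheory Real Set

/-- **Alternative distribution of the Gumbel-max pivotal statistic.**
Let `P` be a probability distribution with all `P w > 0` on a finite vocabulary,
`(U w)` i.i.d. `Uniform(0,1)`, `w*` the argmax of `log (U w) / P w`, and `Y = U w*`.
Then for every `r ∈ [0,1]`, `P(Y ≤ r) = ∑ w, P w * r ^ (1 / P w)`. -/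
theorem gumbel_pivotal_cdf {W : Type*} [Fintype W] {Ω : Type*} [MeasurableSpace Ω]
    (μ : Measure Ω) [IsProbabilityMeasure μ]
    (P : W → ℝ) (hpos : ∀ w, 0 < P w) (hsum : ∑ w, P w = 1)
    (U : W → Ω → ℝ) (hmeas : ∀ w, Measurable (U w))
    (hindep : iIndepFun U μ)
    (hunif : ∀ w, Measure.map (U w) μ = volume.restrict (Set.Ioo (0:ℝ) 1))
    (r : ℝ) (hr : r ∈ Set.Icc (0:ℝ) 1) :
    μ {ω | ∃ w₀ : W,
        (∀ w, w ≠ w₀ → Real.log (U w ω) / P w < Real.log (U w₀ ω) / P w₀) ∧ U w₀ ω ≤ r}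
      = ENNReal.ofReal (∑ w, P w * r ^ (1 / P w)) := by
  classical
  obtain ⟨hr0, hr1⟩ := hr
  set ν : Measure ℝ := volume.restrict (Set.Ioo (0:ℝ) 1) with hν
  have hg : Measurable (fun ω w => U w ω) := measurable_pi_lambda _ hmeas
  -- Step 1: joint law is the product of uniforms
  have hmap : Measure.map (fun ω w => U w ω) μ = Measure.pi (fun _ : W => ν) := by
    refine (Measure.pi_eq (μ := fun _ : W => ν) fun s hs => ?_).symm
    rw [Measure.map_apply hg (MeasurableSet.univ_pi hs)]
    have hpre : (fun ω w => U w ω) ⁻¹' (Set.pi Set.univ s) = ⋂ w ∈ Finset.univ, U w ⁻¹' s w := by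
      ext ω; simp [Set.mem_pi]
    rw [hpre, hindep.measure_inter_preimage_eq_mul Finset.univ (fun w _ => hs w)]
    refine Finset.prod_congr rfl fun w _ => ?_
    rw [← Measure.map_apply (hmeas w) (hs w), hunif w]
  set f : W → (W → ℝ) → ℝ := fun w x => Real.log (x w) / P w with hf
  set S : W → Set (W → ℝ) := fun w₀ => {x | (∀ w, w ≠ w₀ → f w x < f w₀ x) ∧ x w₀ ≤ r} with hS
  have hfm : ∀ w, Measurable (f w) := fun w => ((measurable_pi_apply w).log).div_const _
  have hSm : ∀ w₀, MeasurableSet (S w₀) := by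
    intro w₀
    have hEq : S w₀ = (⋂ w, ⋂ _ : w ≠ w₀, {x | f w x < f w₀ x}) ∩ {x : W → ℝ | x w₀ ≤ r} := by
      ext x; simp [hS]
    rw [hEq]
    exact (MeasurableSet.iInter fun w => MeasurableSet.iInter fun _ =>
      measurableSet_lt (hfm w) (hfm w₀)).inter
      (measurableSet_le (measurable_pi_apply w₀) measurable_const)
  have hdisj : Pairwise (Function.onFun Disjoint S) := by
    intro a b hab
    refine Set.disjoint_left.mpr fun x hxa hxb => ?_
    exact lt_asymm (hxa.1 b (Ne.symm hab)) (hxb.1 a hab)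
  have hev : {ω | ∃ w₀ : W,
        (∀ w, w ≠ w₀ → Real.log (U w ω) / P w < Real.log (U w₀ ω) / P w₀) ∧ U w₀ ω ≤ r}
      = (fun ω w => U w ω) ⁻¹' (⋃ w₀, S w₀) := by
    ext ω; simp [hS, hf]
  -- Step 2: the key computation for each fixed argmax w₀
  have key : ∀ w₀ : W, Measure.pi (fun _ : W => ν) (S w₀)
      = ENNReal.ofReal (P w₀ * r ^ (1 / P w₀)) := by
    intro w₀
    have hP0 : 0 < P w₀ := hpos w₀
    set a' : ℝ := (1 - P w₀) / P w₀ with ha'def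
    have ha1 : a' + 1 = 1 / P w₀ := by rw [ha'def]; field_simp; ring
    have ha' : (-1:ℝ) < a' := by
      have h : (0:ℝ) < a' + 1 := by rw [ha1]; positivity
      linarith
    set e := MeasurableEquiv.piEquivPiSubtypeProd (fun _ : W => ℝ) (fun w => w = w₀) with he
    have hmp := measurePreserving_piEquivPiSubtypeProd (fun _ : W => ν) (fun w => w = w₀)
    set π₂ : Measure ({w : W // ¬ w = w₀} → ℝ) := Measure.pi fun _ => ν with hπ₂
    set T : Set (({w : W // w = w₀} → ℝ) × ({w : W // ¬ w = w₀} → ℝ)) :=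
      {y | (∀ j : {w : W // ¬ w = w₀}, Real.log (y.2 j) / P j < Real.log (y.1 default) / P w₀)
        ∧ y.1 default ≤ r} with hT
    have hdef : ((default : {w : W // w = w₀}) : W) = w₀ := (default : {w : W // w = w₀}).2
    have hSe : S w₀ = e ⁻¹' T := by
      ext x
      simp only [hS, hT, Set.mem_setOf_eq, Set.mem_preimage, he,
        MeasurableEquiv.piEquivPiSubtypeProd, MeasurableEquiv.coe_mk,
        Equiv.piEquivPiSubtypeProd, Equiv.coe_fn_mk, hdef, Subtype.forall, hf]
    have hTm : MeasurableSet T := by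
      have hm1 : Measurable fun y : ({w : W // w = w₀} → ℝ) × ({w : W // ¬ w = w₀} → ℝ) =>
          y.1 default := (measurable_pi_apply default).comp measurable_fst
      have hm2 : ∀ j : {w : W // ¬ w = w₀},
          Measurable fun y : ({w : W // w = w₀} → ℝ) × ({w : W // ¬ w = w₀} → ℝ) =>
          y.2 j := fun j => (measurable_pi_apply j).comp measurable_snd
      have hEq : T = (⋂ j : {w : W // ¬ w = w₀},
          {y : ({w : W // w = w₀} → ℝ) × ({w : W // ¬ w = w₀} → ℝ) |
            Real.log (y.2 j) / P j < Real.log (y.1 default) / P w₀})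
          ∩ {y : ({w : W // w = w₀} → ℝ) × ({w : W // ¬ w = w₀} → ℝ) | y.1 default ≤ r} := by
        ext y; simp [hT]
      rw [hEq]
      exact (MeasurableSet.iInter fun j => measurableSet_lt
          (((hm2 j).log).div_const _) ((hm1.log).div_const _)).inter
        (measurableSet_le hm1 measurable_const)
    set G : ℝ → ENNReal := fun u => if u ≤ r then
      π₂ {b : {w : W // ¬ w = w₀} → ℝ |
        ∀ j : {w : W // ¬ w = w₀}, Real.log (b j) / P j < Real.log u / P w₀} else 0 with hG
    have hslice : ∀ a : {w : W // w = w₀} → ℝ, π₂ (Prod.mk a ⁻¹' T) = G (a default) := by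
      intro a
      by_cases h : a default ≤ r
      · rw [hG]; simp only [if_pos h]; congr 1; ext b; simp [hT, h]
      · rw [hG]; simp only [if_neg h]
        have hempty : Prod.mk a ⁻¹' T = ∅ := by ext b; simp [hT, h]
        rw [hempty, measure_empty]
    have hGval : ∀ u ∈ Set.Ioo (0:ℝ) 1,
        G u = Set.indicator (Set.Iic r) (fun u => ENNReal.ofReal (u ^ a')) u := by
      intro u hu
      have hlogu : Real.log u < 0 := Real.log_neg hu.1 hu.2
      have hc : Real.log u / P w₀ < 0 := div_neg_of_neg_of_pos hlogu hP0
      have hB : {b : {w : W // ¬ w = w₀} → ℝ |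
          ∀ j : {w : W // ¬ w = w₀}, Real.log (b j) / P j < Real.log u / P w₀}
          = Set.pi Set.univ (fun j : {w : W // ¬ w = w₀} =>
              {t : ℝ | Real.log t / P (j : W) < Real.log u / P w₀}) := by
        ext b; simp [Set.mem_pi]
      have hνA : ∀ j : {w : W // ¬ w = w₀},
          ν {t : ℝ | Real.log t / P (j : W) < Real.log u / P w₀}
            = ENNReal.ofReal (Real.exp (Real.log u / P w₀ * P (j : W))) := by
        intro j
        have hEq : {t : ℝ | Real.log t / P (j : W) < Real.log u / P w₀} ∩ Set.Ioo 0 1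
            = Set.Ioo 0 (Real.exp (Real.log u / P w₀ * P (j : W))) := by
          ext t
          simp only [Set.mem_inter_iff, Set.mem_setOf_eq, Set.mem_Ioo]
          constructor
          · rintro ⟨hlt, ht0, _⟩
            exact ⟨ht0, (Real.log_lt_iff_lt_exp ht0).mp ((div_lt_iff₀ (hpos j)).mp hlt)⟩
          · rintro ⟨ht0, htm⟩
            refine ⟨(div_lt_iff₀ (hpos j)).mpr ((Real.log_lt_iff_lt_exp ht0).mpr htm), ht0, ?_⟩
            calc t < Real.exp (Real.log u / P w₀ * P (j : W)) := htm
              _ < 1 := Real.exp_lt_one_iff.mpr (mul_neg_of_neg_of_pos hc (hpos j))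
        rw [hν, Measure.restrict_apply' measurableSet_Ioo, hEq, Real.volume_Ioo, sub_zero]
      have hprodsum : ∑ j : {w : W // ¬ w = w₀}, P (j : W) = 1 - P w₀ := by
        have h := Finset.sum_subtype (p := fun w : W => ¬ w = w₀) (F := inferInstance)
          (Finset.univ.erase w₀) (fun w => by simp [Finset.mem_erase]) P
        rw [← h, Finset.sum_erase_eq_sub (Finset.mem_univ w₀), hsum]
      have hBval : π₂ {b : {w : W // ¬ w = w₀} → ℝ |
          ∀ j : {w : W // ¬ w = w₀}, Real.log (b j) / P j < Real.log u / P w₀}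
          = ENNReal.ofReal (u ^ a') := by
        rw [hB, hπ₂, Measure.pi_pi]
        simp_rw [hνA]
        rw [← ENNReal.ofReal_prod_of_nonneg (fun j _ => (Real.exp_pos _).le),
          ← Real.exp_sum, ← Finset.mul_sum, hprodsum]
        congr 1
        rw [Real.rpow_def_of_pos hu.1, ha'def]
        ring_nf
      rw [hG]
      by_cases h : u ≤ r
      · simp only [if_pos h]
        rw [Set.indicator_of_mem (Set.mem_Iic.mpr h), hBval]
      · simp only [if_neg h]
        rw [Set.indicator_of_notMem (by simpa using h)]
    have hae : (Set.Iic r ∩ Set.Ioo (0:ℝ) 1 : Set ℝ) =ᵐ[volume] Set.Ioc 0 r := by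
      have h1 : volume ({(1:ℝ)} : Set ℝ) = 0 := measure_singleton 1
      rw [Filter.eventuallyEq_set]
      filter_upwards [compl_mem_ae_iff.mpr h1] with x hx
      simp only [Set.mem_compl_iff, Set.mem_singleton_iff] at hx
      simp only [Set.mem_inter_iff, Set.mem_Iic, Set.mem_Ioo, Set.mem_Ioc]
      constructor
      · rintro ⟨hxr, hx0, _⟩; exact ⟨hx0, hxr⟩
      · rintro ⟨hx0, hxr⟩; exact ⟨hxr, hx0, lt_of_le_of_ne (hxr.trans hr1) hx⟩
    have h3 : ∫⁻ u, G u ∂ν = ∫⁻ u in Set.Ioc 0 r, ENNReal.ofReal (u ^ a') ∂volume := by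
      rw [hν, setLIntegral_congr_fun measurableSet_Ioo hGval,
        lintegral_indicator measurableSet_Iic, Measure.restrict_restrict measurableSet_Iic,
        Measure.restrict_congr_set hae]
    have hint : IntegrableOn (fun x : ℝ => x ^ a') (Set.Ioc 0 r) volume := by
      have h := intervalIntegral.intervalIntegrable_rpow' (a := 0) (b := r) ha'
      rwa [intervalIntegrable_iff_integrableOn_Ioc_of_le hr0] at h
    have h4 : ∫⁻ u in Set.Ioc 0 r, ENNReal.ofReal (u ^ a') ∂volume
        = ENNReal.ofReal (∫ u in Set.Ioc 0 r, u ^ a' ∂volume) := by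
      rw [← ofReal_integral_eq_lintegral_ofReal hint
        ((ae_restrict_iff' measurableSet_Ioc).mpr
          (ae_of_all _ fun x hx => Real.rpow_nonneg hx.1.le _))]
    have h5 : ∫ u in Set.Ioc 0 r, u ^ a' ∂volume = P w₀ * r ^ (1 / P w₀) := by
      rw [← intervalIntegral.integral_of_le hr0, integral_rpow (Or.inl ha'), ha1,
        Real.zero_rpow (by positivity), sub_zero, div_div_eq_mul_div, div_one, mul_comm]
    have hlint : ∀ (F : Fintype {w : W // w = w₀}),
        ∫⁻ a, G (a default)
          ∂(@Measure.pi {w : W // w = w₀} (fun _ => ℝ) F (fun _ => inferInstance) fun _ => ν)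
        = ∫⁻ u, G u ∂ν := by
      intro F
      have hcast : (@Measure.pi {w : W // w = w₀} (fun _ => ℝ) F (fun _ => inferInstance)
            fun _ => ν)
          = @Measure.pi {w : W // w = w₀} (fun _ => ℝ) Unique.fintype (fun _ => inferInstance)
            fun _ => ν := by
        congr 1
        exact Subsingleton.elim _ _
      rw [hcast]
      exact (measurePreserving_funUnique ν {w : W // w = w₀}).lintegral_comp_emb
        (MeasurableEquiv.measurableEmbedding _) G
    rw [hSe, hmp.measure_preimage_equiv T, Measure.prod_apply hTm]
    simp_rw [hslice]
    rw [hlint _, h3, h4, h5]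
  rw [hev, ← Measure.map_apply hg (MeasurableSet.iUnion hSm), hmap,
    measure_iUnion hdisj hSm, tsum_fintype,
    ENNReal.ofReal_sum_of_nonneg (fun w _ => mul_nonneg (hpos w).le (Real.rpow_nonneg hr0 _))]
  exact Finset.sum_congr rfl fun w _ => key w
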